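/- Assume the ball-system setup with filling hypotheses (F1) and (F2). Let N ≥ 1 and let 𝔹 be a nonempty finite subset of (1/N)𝔅 such that the balls of 2K𝔹 are pairwise disjoint. Let 1 ≤ i ≤ k, let 0 < δ ≤ 𝔯_min(𝔹), and let d be a g(δ)-fine discrete i-chain in 𝒮 such that supp(∂d) is disjoint from every ball in 𝔹. Then there exists a discrete i-chain d' in 𝒮 such that: (1) d' is δ-fine and ∂d' = ∂d; (2) supp(d') is disjoint from every ball in (1/K)𝔹; (3) supp(d − d') is contained in the union of the balls in 2K𝔹; (4) diam(d') ≤ diam(d) + 4K·√(𝔯_max(𝔹)); (5) if moreover d is g(g(δ))-fine, then d − d' = ∂e for a δ-fine discrete (i+1)-chain e supported in the union of the balls in 2K²𝔹. -/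

import Mathlib

/-- Discrete chains with `m` vertices: the free `ℤ`-module on ordered `m`-tuples of points. -/
abbrev DChain (α : Type*) (m : ℕ) := (Fin m → α) →₀ ℤ

/-- The `i`-th face operator on discrete chains, deleting the `i`-th vertex. -/
noncomputable def dface {α : Type*} {m : ℕ} (i : Fin (m + 1)) :
    DChain α (m + 1) →ₗ[ℤ] DChain α m :=
  Finsupp.lmapDomain ℤ ℤ (fun σ => σ ∘ i.succAbove)

/-- The simplicial boundary operator on discrete chains:
`∂[x₀,…,xₙ] = ∑ i, (-1)^i [x₀,…,x̂ᵢ,…,xₙ]`. -/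
noncomputable def dbd {α : Type*} {m : ℕ} : DChain α (m + 1) →ₗ[ℤ] DChain α m :=
  ∑ i : Fin (m + 1), ((-1 : ℤ) ^ (i : ℕ)) • dface i

/-- The chain map induced by a map on vertices. -/
noncomputable def vmap {α β : Type*} (f : α → β) {m : ℕ} : DChain α m →ₗ[ℤ] DChain β m :=
  Finsupp.lmapDomain ℤ ℤ (fun σ => f ∘ σ)

/-- The support of a discrete chain: the set of vertices appearing in its
cancellation-free expression. -/
def chainSupp {α : Type*} {m : ℕ} (c : DChain α m) : Set α :=
  ⋃ σ ∈ c.support, Set.range σ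
/-- A discrete chain is `δ`-fine if each of its simplices has diameter at most `δ`. -/
def FineLE {X : Type*} [PseudoMetricSpace X] {m : ℕ} (δ : ℝ) (c : DChain X m) : Prop :=
  ∀ σ ∈ c.support, Metric.diam (Set.range σ) ≤ δ

/-- The closed annulus `A(p; r₁, r₂)` around `p`. -/
def annulus {X : Type*} [PseudoMetricSpace X] (p : X) (r₁ r₂ : ℝ) : Set X :=
  {x | r₁ ≤ dist p x ∧ dist p x ≤ r₂}

/-- Filling hypothesis (F1): reduced `g(δ)`-fine discrete `i`-cycles (`0 ≤ i < k`) supported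
in an annulus `A(p; r₁, r₂)` with `δ ≤ r₁ < r₂ ≤ r_p/K` around a point `p ∈ P` bound
`δ`-fine chains in `A(p; r₁/K, K·r₂)` of diameter at most `K·√(diam c)`. -/
def FillAnnuli {𝒮 : Type*} [MetricSpace 𝒮] (k : ℕ) (K : ℝ) (g : ℝ → ℝ)
    (P : Set 𝒮) (r : 𝒮 → ℝ) : Prop :=
  ∀ p ∈ P, ∀ δ : ℝ, 0 < δ → ∀ i : ℕ, i < k → ∀ r₁ r₂ : ℝ, δ ≤ r₁ → r₁ < r₂ → r₂ ≤ r p / K →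
    ∀ c : DChain 𝒮 (i + 1), dbd c = 0 → FineLE (g δ) c → chainSupp c ⊆ annulus p r₁ r₂ →
      ∃ d : DChain 𝒮 (i + 2), dbd d = c ∧ FineLE δ d ∧
        chainSupp d ⊆ annulus p (r₁ / K) (K * r₂) ∧
        Metric.diam (chainSupp d) ≤ K * Real.sqrt (Metric.diam (chainSupp c))

/-- Filling hypothesis (F2): reduced `g(δ)`-fine discrete `i`-cycles (`0 ≤ i ≤ k`) supported
in a ball `B(p, r₂)` with `0 < r₂ ≤ r_p/K` around a point `p ∈ P` bound `δ`-fine chains in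
`B(p, K·r₂)` of diameter at most `K·√(diam c)`. -/
def FillBalls {𝒮 : Type*} [MetricSpace 𝒮] (k : ℕ) (K : ℝ) (g : ℝ → ℝ)
    (P : Set 𝒮) (r : 𝒮 → ℝ) : Prop :=
  ∀ p ∈ P, ∀ δ : ℝ, 0 < δ → ∀ i : ℕ, i ≤ k → ∀ r₂ : ℝ, 0 < r₂ → r₂ ≤ r p / K →
    ∀ c : DChain 𝒮 (i + 1), dbd c = 0 → FineLE (g δ) c →
      chainSupp c ⊆ Metric.closedBall p r₂ →
      ∃ d : DChain 𝒮 (i + 2), dbd d = c ∧ FineLE δ d ∧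
        chainSupp d ⊆ Metric.closedBall p (K * r₂) ∧
        Metric.diam (chainSupp d) ≤ K * Real.sqrt (Metric.diam (chainSupp c))


-- val lemma
lemma val_succAbove' {n : ℕ} (p : Fin (n+1)) (i : Fin n) :
    ((p.succAbove i : Fin (n+1)) : ℕ) = if (i:ℕ) < (p:ℕ) then (i:ℕ) else (i:ℕ)+1 := by
  rw [Fin.succAbove]
  by_cases h : (i:ℕ) < (p:ℕ)
  · rw [if_pos (by simpa [Fin.lt_def] using h), if_pos h]; rfl
  · rw [if_neg (by simpa [Fin.lt_def] using h), if_neg h]; rfl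

lemma succAbove_succAbove_of_lt {m : ℕ} (a : Fin (m+2)) (b : Fin (m+1)) (h : (b:ℕ) < (a:ℕ))
    (ha : a ≠ 0) (k : Fin m) :
    a.succAbove (b.succAbove k) = (b.castSucc).succAbove ((a.pred ha).succAbove k) := by
  apply Fin.ext
  have h1 := val_succAbove' a (b.succAbove k)
  have h2 := val_succAbove' b k
  have h3 := val_succAbove' b.castSucc ((a.pred ha).succAbove k)
  have h4 := val_succAbove' (a.pred ha) k
  have hp : ((a.pred ha : Fin (m+1)) : ℕ) = (a:ℕ) - 1 := rfl
  have hc : ((b.castSucc : Fin (m+2)) : ℕ) = (b:ℕ) := rfl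
  rw [h2] at h1
  rw [hp] at h4
  rw [h4] at h3
  rw [h1, h3, hc]
  have ha0 : 0 < (a:ℕ) := Nat.pos_of_ne_zero (by intro h; exact ha (Fin.ext (by simp [h])))
  split_ifs <;> omega

lemma dface_single {α : Type*} {m : ℕ} (i : Fin (m+1)) (σ : Fin (m+1) → α) (z : ℤ) :
    dface i (Finsupp.single σ z) = Finsupp.single (σ ∘ i.succAbove) z := by
  simp [dface, Finsupp.lmapDomain_apply, Finsupp.mapDomain_single]

lemma dbd_single {α : Type*} {m : ℕ} (σ : Fin (m+1) → α) (z : ℤ) :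
    dbd (Finsupp.single σ z)
      = ∑ t : Fin (m+1), ((-1:ℤ)^(t:ℕ)) • Finsupp.single (σ ∘ t.succAbove) z := by
  simp [dbd, LinearMap.sum_apply, LinearMap.smul_apply, dface_single]

lemma dbd_dbd {α : Type*} {m : ℕ} (c : DChain α (m+2)) : dbd (dbd c) = 0 := by
  have : (dbd.comp dbd : DChain α (m+2) →ₗ[ℤ] DChain α m) = 0 := by
    apply Finsupp.lhom_ext
    intro σ z
    simp only [LinearMap.comp_apply, LinearMap.zero_apply]
    rw [dbd_single, map_sum]
    simp only [map_smul, dbd_single, Finset.smul_sum, smul_smul, ← pow_add]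
    rw [← Finset.sum_product']
    set f : Fin (m+2) × Fin (m+1) → DChain α m := fun p =>
      ((-1:ℤ)^((p.1:ℕ)+(p.2:ℕ))) • Finsupp.single (σ ∘ p.1.succAbove ∘ p.2.succAbove) z with hf
    show ∑ p : Fin (m+2) × Fin (m+1), f p = 0
    have key : ∀ (a : Fin (m+2)) (b : Fin (m+1)) (h : (b:ℕ) < (a:ℕ)) (ha : a ≠ 0),
        (σ ∘ a.succAbove ∘ b.succAbove) = (σ ∘ (b.castSucc).succAbove ∘ ((a.pred ha)).succAbove) := by
      intro a b h ha
      funext kk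
      simp only [Function.comp_apply]
      rw [succAbove_succAbove_of_lt a b h ha kk]
    apply Finset.sum_ninvolution
      (g := fun p : Fin (m+2) × Fin (m+1) =>
        if h : (p.2:ℕ) < (p.1:ℕ) then
          ((p.2.castSucc : Fin (m+2)), p.1.pred (by
            intro h0; rw [h0] at h; simp at h))
        else ((p.2.succ : Fin (m+2)), (⟨(p.1:ℕ), by
          push_neg at h
          exact lt_of_le_of_lt h p.2.isLt⟩ : Fin (m+1))))
    · -- cancellation
      intro p
      obtain ⟨a, b⟩ := p
      by_cases h : (b:ℕ) < (a:ℕ)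
      · rw [dif_pos h]
        have ha : a ≠ 0 := by intro h0; rw [h0] at h; simp at h
        have ha' := ha
        simp only [hf]
        rw [← key a b h ha]
        rw [← add_smul]
        convert zero_smul ℤ _
        have hpred : ((a.pred ha : Fin (m+1)) : ℕ) = (a:ℕ) - 1 := rfl
        have hcs : ((b.castSucc : Fin (m+2)) : ℕ) = (b:ℕ) := rfl
        rw [hpred, hcs]
        have h1 : (b:ℕ) + ((a:ℕ)-1) + 1 = (a:ℕ) + (b:ℕ) := by omega
        rw [← h1, pow_succ]
        ring
      · rw [dif_neg h]
        push_neg at h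
        simp only [hf]
        have hlt : ((⟨(a:ℕ), lt_of_le_of_lt h b.isLt⟩ : Fin (m+1)) : ℕ) < ((b.succ : Fin (m+2)) : ℕ) := by
          simp; omega
        have hne : (b.succ : Fin (m+2)) ≠ 0 := Fin.succ_ne_zero b
        have := key b.succ (⟨(a:ℕ), lt_of_le_of_lt h b.isLt⟩ : Fin (m+1)) hlt hne
        rw [this]
        have e1 : ((⟨(a:ℕ), lt_of_le_of_lt h b.isLt⟩ : Fin (m+1)).castSucc : Fin (m+2)) = a := by
          apply Fin.ext; rfl
        have e2 : (b.succ).pred hne = b := by simp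
        rw [e1, e2, ← add_smul]
        convert zero_smul ℤ _
        have h1 : (a:ℕ) + (b:ℕ) + 1 = ((b.succ : Fin (m+2)):ℕ) + ((⟨(a:ℕ), lt_of_le_of_lt h b.isLt⟩ : Fin (m+1)):ℕ) := by
          simp; omega
        rw [← h1, pow_succ]
        ring
    · -- no fixed points needed condition: f a ≠ 0 → g a ≠ a
      intro p hfp
      obtain ⟨a, b⟩ := p
      by_cases h : (b:ℕ) < (a:ℕ)
      · rw [dif_pos h]
        intro hEq
        have := congrArg (fun q => ((q.1 : Fin (m+2)) : ℕ)) hEq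
        dsimp only at this
        rw [Fin.coe_castSucc] at this
        omega
      · rw [dif_neg h]
        push_neg at h
        intro hEq
        have := congrArg (fun q => ((q.1 : Fin (m+2)) : ℕ)) hEq
        dsimp only at this
        rw [Fin.val_succ] at this
        omega
    · intro p; exact Finset.mem_univ _
    · -- involution
      intro p
      obtain ⟨a, b⟩ := p
      by_cases h : (b:ℕ) < (a:ℕ)
      · rw [dif_pos h]
        rw [dif_neg (by simp only [Fin.coe_pred, Fin.coe_castSucc]; omega)]
        ext
        · simp [Fin.succ_pred]
        · simp
      · rw [dif_neg h]
        push_neg at h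
        rw [dif_pos (by simp only [Fin.val_succ]; exact lt_of_le_of_lt h (Nat.lt_succ_self _))]
        ext
        · simp
        · simp [Fin.pred_succ]
  have h2 := LinearMap.congr_fun this c
  simpa using h2

section Supp
variable {α : Type*} {m : ℕ}

lemma mem_chainSupp {c : DChain α m} {x : α} :
    x ∈ chainSupp c ↔ ∃ σ ∈ c.support, ∃ t, σ t = x := by
  simp [chainSupp, Set.mem_iUnion, Set.mem_range]

lemma chainSupp_subset_of_support_subset {c d : DChain α m}
    (h : c.support ⊆ d.support) : chainSupp c ⊆ chainSupp d := by
  intro x hx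
  rw [mem_chainSupp] at hx ⊢
  obtain ⟨σ, hσ, t, ht⟩ := hx
  exact ⟨σ, h hσ, t, ht⟩

lemma chainSupp_zero : chainSupp (0 : DChain α m) = ∅ := by
  simp [chainSupp]

lemma chainSupp_add_subset (a b : DChain α m) :
    chainSupp (a + b) ⊆ chainSupp a ∪ chainSupp b := by
  classical
  intro x hx
  rw [mem_chainSupp] at hx
  obtain ⟨σ, hσ, t, ht⟩ := hx
  rcases Finset.mem_union.1 (Finsupp.support_add hσ) with h | h
  · exact Or.inl (mem_chainSupp.2 ⟨σ, h, t, ht⟩)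
  · exact Or.inr (mem_chainSupp.2 ⟨σ, h, t, ht⟩)

lemma chainSupp_neg (a : DChain α m) : chainSupp (-a) = chainSupp a := by
  simp [chainSupp, Finsupp.support_neg]

lemma chainSupp_sub_subset (a b : DChain α m) :
    chainSupp (a - b) ⊆ chainSupp a ∪ chainSupp b := by
  rw [sub_eq_add_neg]
  refine (chainSupp_add_subset a (-b)).trans ?_
  rw [chainSupp_neg]

lemma chainSupp_sum_subset {ι : Type*} (s : Finset ι) (f : ι → DChain α m) :
    chainSupp (∑ q ∈ s, f q) ⊆ ⋃ q ∈ s, chainSupp (f q) := by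
  classical
  induction s using Finset.induction with
  | empty => simp [chainSupp_zero]
  | insert q s hq ih =>
    rw [Finset.sum_insert hq]
    refine (chainSupp_add_subset _ _).trans ?_
    intro x hx
    rcases hx with hx | hx
    · exact Set.mem_biUnion (Finset.mem_insert_self q s) hx
    · obtain ⟨u, hu1, hu2⟩ := by
        simpa [Set.mem_iUnion] using ih hx
      exact Set.mem_biUnion (Finset.mem_insert_of_mem hu1) hu2

lemma chainSupp_finite (c : DChain α m) : (chainSupp c).Finite :=
  Set.Finite.biUnion c.support.finite_toSet (fun σ _ => Set.finite_range σ)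

lemma chainSupp_nonempty {c : DChain α (m+1)} (h : c ≠ 0) : (chainSupp c).Nonempty := by
  obtain ⟨σ, hσ⟩ := Finsupp.support_nonempty_iff.2 h
  exact ⟨σ 0, mem_chainSupp.2 ⟨σ, hσ, 0, rfl⟩⟩

lemma exists_range_superset_of_mem_support_dbd {c : DChain α (m+1)}
    {σ' : Fin m → α} (h : σ' ∈ (dbd c).support) :
    ∃ τ ∈ c.support, Set.range σ' ⊆ Set.range τ := by
  classical
  have : dbd c = ∑ t : Fin (m+1), (((-1:ℤ)^(t:ℕ)) • dface t) c := by
    rw [dbd, LinearMap.sum_apply]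
  rw [this] at h
  obtain ⟨t, -, ht⟩ := Finsupp.mem_support_finset_sum _ h
  have h2 : σ' ∈ (dface t c).support := by
    have hss : ((((-1:ℤ)^(t:ℕ)) • dface t c : DChain α m)).support ⊆ (dface t c).support :=
      Finsupp.support_smul
    rw [LinearMap.smul_apply] at ht
    exact hss ht
  have h3 : σ' ∈ c.support.image (fun τ => τ ∘ t.succAbove) := by
    have := Finsupp.mapDomain_support (f := fun τ : Fin (m+1) → α => τ ∘ t.succAbove) (s := c)
    exact this (by simpa [dface, Finsupp.lmapDomain_apply] using h2)
  obtain ⟨τ, hτ, hτ2⟩ := Finset.mem_image.1 h3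
  exact ⟨τ, hτ, by rw [← hτ2]; exact Set.range_comp_subset_range _ _⟩

lemma chainSupp_dbd_subset (c : DChain α (m+1)) : chainSupp (dbd c) ⊆ chainSupp c := by
  intro x hx
  obtain ⟨σ', hσ', t, ht⟩ := mem_chainSupp.1 hx
  obtain ⟨τ, hτ, hsub⟩ := exists_range_superset_of_mem_support_dbd hσ'
  obtain ⟨u, hu⟩ := hsub ⟨t, ht⟩
  exact mem_chainSupp.2 ⟨τ, hτ, u, hu⟩

end Supp

section Fine
variable {X : Type*} [PseudoMetricSpace X] {m : ℕ}

lemma FineLE.mono {δ δ' : ℝ} (h : δ ≤ δ') {c : DChain X m} (hc : FineLE δ c) : FineLE δ' c :=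
  fun σ hσ => (hc σ hσ).trans h

lemma FineLE_of_support_subset {δ : ℝ} {c d : DChain X m}
    (h : c.support ⊆ d.support) (hd : FineLE δ d) : FineLE δ c :=
  fun σ hσ => hd σ (h hσ)

lemma FineLE_zero {δ : ℝ} : FineLE δ (0 : DChain X m) := by
  intro σ hσ; simp at hσ

lemma FineLE_add {δ : ℝ} {a b : DChain X m} (ha : FineLE δ a) (hb : FineLE δ b) :
    FineLE δ (a + b) := by
  classical
  intro σ hσ
  rcases Finset.mem_union.1 (Finsupp.support_add hσ) with h | h
  · exact ha σ h
  · exact hb σ h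

lemma FineLE_neg {δ : ℝ} {a : DChain X m} (ha : FineLE δ a) : FineLE δ (-a) := by
  intro σ hσ
  rw [Finsupp.support_neg] at hσ
  exact ha σ hσ

lemma FineLE_sub {δ : ℝ} {a b : DChain X m} (ha : FineLE δ a) (hb : FineLE δ b) :
    FineLE δ (a - b) := by
  rw [sub_eq_add_neg]; exact FineLE_add ha (FineLE_neg hb)

lemma FineLE_sum {ι : Type*} {δ : ℝ} {s : Finset ι} {f : ι → DChain X m}
    (h : ∀ q ∈ s, FineLE δ (f q)) : FineLE δ (∑ q ∈ s, f q) := by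
  classical
  induction s using Finset.induction with
  | empty => simpa using FineLE_zero
  | insert q s hq ih =>
    rw [Finset.sum_insert hq]
    exact FineLE_add (h q (Finset.mem_insert_self q s))
      (ih (fun u hu => h u (Finset.mem_insert_of_mem hu)))

lemma FineLE_dbd {δ : ℝ} {c : DChain X (m+1)} (hc : FineLE δ c) : FineLE δ (dbd c) := by
  intro σ hσ
  obtain ⟨τ, hτ, hsub⟩ := exists_range_superset_of_mem_support_dbd hσ
  exact le_trans (Metric.diam_mono hsub (Set.finite_range τ).isBounded) (hc τ hτ)

end Fine

set_option maxHeartbeats 2000000 in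
/-- detouring around disjoint balls.  In the ball-system setup with the
filling hypotheses (F1), (F2): given `N ≥ 1` and a nonempty finite family `𝔹 ⊆ (1/N)𝔅` of
balls `B(q, r_q/(N·M))`, `q ∈ Q`, whose `2K`-rescalings are pairwise disjoint, any
`g(δ)`-fine discrete `i`-chain `d` (`1 ≤ i ≤ k`, `0 < δ ≤ 𝔯_min(𝔹)`) with `supp(∂d)`
disjoint from every ball of `𝔹` admits a discrete `i`-chain `d'` with:
(1) `d'` is `δ`-fine and `∂d' = ∂d`;
(2) `supp(d')` is disjoint from every ball of `(1/K)𝔹`;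
(3) `supp(d - d')` is contained in the union of the balls of `2K𝔹`;
(4) `diam(d') ≤ diam(d) + 4K·√(𝔯_max(𝔹))`;
(5) if moreover `d` is `g(g(δ))`-fine, then `d - d' = ∂e` for a `δ`-fine `(i+1)`-chain `e`
supported in the union of the balls of `2K²𝔹`. -/
theorem detour_disjoint_balls {𝒮 : Type*} [MetricSpace 𝒮]
    (k : ℕ) (hk : 1 ≤ k) (K : ℝ) (hK : 9 ≤ K)
    (g : ℝ → ℝ) (hg : ∀ δ : ℝ, 0 < δ → 0 < g δ ∧ g δ ≤ δ)
    (P : Set 𝒮) (r : 𝒮 → ℝ) (hr : ∀ p ∈ P, 0 < r p)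
    (M : ℝ) (hM : 2 * K ^ 2 ≤ M)
    (hF1 : FillAnnuli k K g P r) (hF2 : FillBalls k K g P r)
    (N : ℝ) (hN : 1 ≤ N)
    (Q : Finset 𝒮) (hQP : ↑Q ⊆ P) (hQne : Q.Nonempty)
    (hdisj : ∀ q ∈ Q, ∀ q' ∈ Q, q ≠ q' →
      Disjoint (Metric.closedBall q (2 * K * (r q / (N * M))))
        (Metric.closedBall q' (2 * K * (r q' / (N * M)))))
    (i : ℕ) (hi1 : 1 ≤ i) (hik : i ≤ k)
    (δ : ℝ) (hδ0 : 0 < δ) (hδmin : δ ≤ Q.inf' hQne (fun q => r q / (N * M)))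
    (d : DChain 𝒮 (i + 1)) (hdfine : FineLE (g δ) d)
    (hbd : ∀ q ∈ Q, ∀ x ∈ chainSupp (dbd d), x ∉ Metric.closedBall q (r q / (N * M))) :
    ∃ d' : DChain 𝒮 (i + 1),
      FineLE δ d' ∧ dbd d' = dbd d ∧
      (∀ q ∈ Q, ∀ x ∈ chainSupp d', x ∉ Metric.closedBall q ((r q / (N * M)) / K)) ∧
      chainSupp (d - d') ⊆ (⋃ q ∈ Q, Metric.closedBall q (2 * K * (r q / (N * M)))) ∧
      Metric.diam (chainSupp d') ≤ Metric.diam (chainSupp d)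
        + 4 * K * Real.sqrt (Q.sup' hQne (fun q => r q / (N * M))) ∧
      (FineLE (g (g δ)) d →
        ∃ e : DChain 𝒮 (i + 2), dbd e = d - d' ∧ FineLE δ e ∧
          chainSupp e ⊆ ⋃ q ∈ Q, Metric.closedBall q (2 * K ^ 2 * (r q / (N * M)))) := by
  classical
  obtain ⟨j, rfl⟩ : ∃ j, i = j + 1 := ⟨i - 1, (Nat.succ_pred_eq_of_pos hi1).symm⟩
  have hjk : j < k := lt_of_lt_of_le (Nat.lt_succ_self j) hik
  set s : 𝒮 → ℝ := fun q => r q / (N * M) with hs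
  have hK0 : (0 : ℝ) < K := lt_of_lt_of_le (by norm_num) hK
  have hK1 : (1 : ℝ) ≤ K := le_trans (by norm_num) hK
  have hNM0 : (0 : ℝ) < N * M := by nlinarith
  have hNM : (2 * K ^ 2 : ℝ) ≤ N * M := by nlinarith
  have hs0 : ∀ q ∈ Q, 0 < s q := fun q hq => div_pos (hr q (hQP hq)) hNM0
  have hδs : ∀ q ∈ Q, δ ≤ s q := fun q hq => le_trans hδmin (Finset.inf'_le _ hq)
  have hgδ := hg δ hδ0
  have hts : ∀ q ∈ Q, ∀ t : ℝ, 0 ≤ t → t ≤ 2 * K → t * s q ≤ r q / K := by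
    intro q hq t ht0 ht
    have hrq := hr q (hQP hq)
    have : t * s q = (t * r q) / (N * M) := by rw [hs]; ring
    rw [this, div_le_div_iff₀ hNM0 hK0]
    nlinarith [mul_le_mul_of_nonneg_right ht (by positivity : (0:ℝ) ≤ r q * K),
      mul_le_mul_of_nonneg_right hNM (le_of_lt hrq)]
  have h2s : ∀ q ∈ Q, 2 * s q ≤ r q / K := fun q hq =>
    hts q hq 2 (by norm_num) (by nlinarith)
  have h2Ks : ∀ q ∈ Q, 2 * K * s q ≤ r q / K := fun q hq =>
    hts q hq (2 * K) (by nlinarith) le_rfl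
  -- the fineness parameter used for the fillings
  obtain ⟨δ₀, hδ₀pos, hδ₀le, hdfine₀, hδ₀5⟩ :
      ∃ δ₀, 0 < δ₀ ∧ δ₀ ≤ δ ∧ FineLE (g δ₀) d ∧ (FineLE (g (g δ)) d → δ₀ = g δ) := by
    by_cases h5 : FineLE (g (g δ)) d
    · exact ⟨g δ, hgδ.1, hgδ.2, h5, fun _ => rfl⟩
    · exact ⟨δ, hδ0, le_rfl, hdfine, fun h => absurd h h5⟩
  -- the subchain of d meeting each ball
  set p : 𝒮 → (Fin (j + 2) → 𝒮) → Prop := fun q σ => ∃ t, dist q (σ t) ≤ s q with hp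
  set dq : 𝒮 → DChain 𝒮 (j + 2) := fun q => d.filter (p q) with hdq
  have hdq_supp : ∀ q, ∀ σ ∈ (dq q).support, σ ∈ d.support ∧ p q σ := by
    intro q σ hσ
    rw [hdq] at hσ
    simp only [Finsupp.support_filter, Finset.mem_filter] at hσ
    exact hσ
  have hsimp_diam : ∀ σ ∈ d.support, ∀ t u, dist (σ t) (σ u) ≤ δ := by
    intro σ hσ t u
    exact le_trans (le_trans (Metric.dist_le_diam_of_mem (Set.finite_range σ).isBounded
      ⟨t, rfl⟩ ⟨u, rfl⟩) (hdfine σ hσ)) hgδ.2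
  have hexcl : ∀ σ ∈ d.support, ∀ q ∈ Q, ∀ q' ∈ Q, q ≠ q' → p q σ → p q' σ → False := by
    intro σ hσ q hq q' hq' hne hpq hpq'
    obtain ⟨t, htq⟩ := hpq
    obtain ⟨u, huq⟩ := hpq'
    have h1 : σ t ∈ Metric.closedBall q (2 * K * (r q / (N * M))) := by
      rw [Metric.mem_closedBall, dist_comm]
      have := hs0 q hq
      calc dist q (σ t) ≤ s q := htq
        _ ≤ 2 * K * s q := by nlinarith
    have h2 : σ t ∈ Metric.closedBall q' (2 * K * (r q' / (N * M))) := by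
      rw [Metric.mem_closedBall, dist_comm]
      have hd1 : dist q' (σ t) ≤ dist q' (σ u) + dist (σ u) (σ t) := dist_triangle _ _ _
      have hd2 := hsimp_diam σ hσ u t
      have := hs0 q' hq'
      have := hδs q' hq'
      calc dist q' (σ t) ≤ s q' + δ := by linarith [huq, hd2, hd1]
        _ ≤ 2 * K * s q' := by nlinarith
    exact Set.disjoint_left.1 (hdisj q hq q' hq' hne) h1 h2
  set rest : DChain 𝒮 (j + 2) := d - ∑ q ∈ Q, dq q with hrestdef
  have hrest : ∀ σ ∈ rest.support, σ ∈ d.support ∧ ∀ q ∈ Q, ¬ p q σ := by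
    intro σ hσ
    rw [Finsupp.mem_support_iff] at hσ
    have hval : rest σ = d σ - ∑ q ∈ Q, (if p q σ then d σ else 0) := by
      rw [hrestdef]
      rw [Finsupp.sub_apply]
      congr 1
      rw [Finset.sum_apply']
      exact Finset.sum_congr rfl (fun q hq => by rw [hdq]; simp [Finsupp.filter_apply])
    by_cases hd0 : d σ = 0
    · exact absurd (by rw [hval, hd0]; simp) hσ
    by_cases hex : ∃ q ∈ Q, p q σ
    · exfalso
      obtain ⟨q0, hq0, hpq0⟩ := hex
      apply hσ
      rw [hval, Finset.sum_eq_single q0 ?_ ?_]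
      · rw [if_pos hpq0, sub_self]
      · intro q hq hne
        rw [if_neg]
        intro hpq
        exact hexcl σ (Finsupp.mem_support_iff.2 hd0) q hq q0 hq0 hne hpq hpq0
      · intro h; exact absurd hq0 h
    · push_neg at hex
      exact ⟨Finsupp.mem_support_iff.2 hd0, hex⟩
  have hdq_ball : ∀ q ∈ Q, ∀ x ∈ chainSupp (dq q), dist q x ≤ s q + δ := by
    intro q hq x hx
    obtain ⟨σ, hσ, t, ht⟩ := mem_chainSupp.1 hx
    obtain ⟨hσd, u, hu⟩ := hdq_supp q σ hσ
    have := hsimp_diam σ hσd u t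
    calc dist q x = dist q (σ t) := by rw [ht]
      _ ≤ dist q (σ u) + dist (σ u) (σ t) := dist_triangle _ _ _
      _ ≤ s q + δ := add_le_add hu this
  have hcq_far : ∀ q ∈ Q, ∀ x ∈ chainSupp (dbd (dq q)), s q < dist q x := by
    intro q hq x hx
    have hsplit : dbd (dq q) = dbd d - dbd (d - dq q) := by
      rw [map_sub]; abel
    rw [hsplit] at hx
    rcases chainSupp_sub_subset _ _ hx with hx | hx
    · have := hbd q hq x hx
      rw [Metric.mem_closedBall] at this
      push_neg at this
      rw [dist_comm] at this
      exact this
    · have hrw : d - dq q = d.filter (fun σ => ¬ p q σ) := by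
        rw [hdq]
        ext σ
        simp only [Finsupp.sub_apply, Finsupp.filter_apply]
        by_cases hpq : p q σ
        · rw [if_pos hpq, if_neg (not_not_intro hpq), sub_self]
        · rw [if_neg hpq, if_pos hpq, sub_zero]
      have hx' := chainSupp_dbd_subset _ hx
      rw [hrw] at hx'
      obtain ⟨σ, hσ, t, ht⟩ := mem_chainSupp.1 hx'
      rw [Finsupp.support_filter, Finset.mem_filter] at hσ
      have hnp : ¬ dist q (σ t) ≤ s q := fun hle => hσ.2 ⟨t, hle⟩
      rw [← ht]
      exact not_le.1 hnp
  have hsqrt4 : Real.sqrt 4 = 2 := by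
    rw [show (4:ℝ) = 2 ^ 2 by norm_num, Real.sqrt_sq (by norm_num : (0:ℝ) ≤ 2)]
  -- round 1: fill the boundary cycles in annuli
  have hEx : ∀ q : 𝒮, ∃ e : DChain 𝒮 (j + 2), q ∈ Q →
      dbd e = dbd (dq q) ∧ FineLE δ₀ e ∧
      (∀ x ∈ chainSupp e, s q / K < dist q x ∧ dist q x ≤ 2 * K * s q) ∧
      (∀ y ∈ chainSupp e, ∃ x ∈ chainSupp d, dist x y ≤ 2 * K * Real.sqrt (s q)) := by
    intro q
    by_cases hq : q ∈ Q
    swap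
    · exact ⟨0, fun h => absurd h hq⟩
    by_cases hc0 : dbd (dq q) = 0
    · refine ⟨0, fun _ => ⟨by rw [map_zero, hc0], FineLE_zero, ?_, ?_⟩⟩ <;>
        simp [chainSupp_zero]
    obtain ⟨x0, hx0mem, hx0min⟩ := Set.exists_min_image (chainSupp (dbd (dq q)))
      (fun x => dist q x) (chainSupp_finite _) (chainSupp_nonempty hc0)
    have hsupp_sub : chainSupp (dbd (dq q)) ⊆ chainSupp (dq q) := chainSupp_dbd_subset _
    have hsupp_d : chainSupp (dq q) ⊆ chainSupp d :=
      chainSupp_subset_of_support_subset (fun σ hσ => (hdq_supp q σ hσ).1)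
    have hm0lo : s q < dist q x0 := hcq_far q hq x0 hx0mem
    have hm0hi : dist q x0 ≤ s q + δ := hdq_ball q hq x0 (hsupp_sub hx0mem)
    set r₁ : ℝ := (s q + dist q x0) / 2 with hr₁
    set r₂ : ℝ := s q + δ with hr₂
    have hr₁lo : s q < r₁ := by rw [hr₁]; linarith
    have hr₁hi : r₁ < dist q x0 := by rw [hr₁]; linarith
    have hδ₀r₁ : δ₀ ≤ r₁ := le_trans hδ₀le (le_trans (hδs q hq) (le_of_lt hr₁lo))
    have hr₁₂ : r₁ < r₂ := lt_of_lt_of_le hr₁hi hm0hi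
    have hr₂K : r₂ ≤ r q / K := le_trans (by rw [hr₂]; linarith [hδs q hq]) (h2s q hq)
    have hcyc : dbd (dbd (dq q)) = 0 := dbd_dbd _
    have hfin : FineLE (g δ₀) (dbd (dq q)) :=
      FineLE_dbd (FineLE_of_support_subset (fun σ hσ => (hdq_supp q σ hσ).1) hdfine₀)
    have hann : chainSupp (dbd (dq q)) ⊆ annulus q r₁ r₂ := by
      intro x hx
      constructor
      · exact le_trans (le_of_lt hr₁hi) (hx0min x hx)
      · exact hdq_ball q hq x (hsupp_sub hx)
    obtain ⟨e, he1, he2, he3, he4⟩ := hF1 q (hQP hq) δ₀ hδ₀pos j hjk r₁ r₂ hδ₀r₁ hr₁₂ hr₂K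
      (dbd (dq q)) hcyc hfin hann
    have hdiamc : Metric.diam (chainSupp (dbd (dq q))) ≤ 4 * s q := by
      apply Metric.diam_le_of_forall_dist_le (by nlinarith [hs0 q hq, hδs q hq])
      intro x hx y hy
      have h1 := hdq_ball q hq x (hsupp_sub hx)
      have h2 := hdq_ball q hq y (hsupp_sub hy)
      have h3 : dist x y ≤ dist x q + dist q y := dist_triangle _ _ _
      rw [dist_comm x q] at h3
      have := hδs q hq
      linarith
    have hdiame : Metric.diam (chainSupp e) ≤ 2 * K * Real.sqrt (s q) := by
      refine le_trans he4 ?_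
      have h1 : Real.sqrt (Metric.diam (chainSupp (dbd (dq q)))) ≤ Real.sqrt (4 * s q) :=
        Real.sqrt_le_sqrt hdiamc
      have h2 : Real.sqrt (4 * s q) = 2 * Real.sqrt (s q) := by
        rw [Real.sqrt_mul (by norm_num : (0:ℝ) ≤ 4), hsqrt4]
      calc K * Real.sqrt (Metric.diam (chainSupp (dbd (dq q))))
          ≤ K * Real.sqrt (4 * s q) := by nlinarith
        _ = 2 * K * Real.sqrt (s q) := by rw [h2]; ring
    refine ⟨e, fun _ => ⟨he1, he2, ?_, ?_⟩⟩
    · intro x hx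
      obtain ⟨hx1, hx2⟩ := he3 hx
      constructor
      · calc s q / K < r₁ / K := (div_lt_div_iff_of_pos_right hK0).2 hr₁lo
          _ ≤ dist q x := hx1
      · calc dist q x ≤ K * r₂ := hx2
          _ ≤ 2 * K * s q := by rw [hr₂]; nlinarith [hδs q hq]
    · intro y hy
      refine ⟨x0, hsupp_d (hsupp_sub hx0mem), ?_⟩
      have hx0e : x0 ∈ chainSupp e := by
        have : chainSupp (dbd e) ⊆ chainSupp e := chainSupp_dbd_subset e
        rw [he1] at this
        exact this hx0mem
      exact le_trans (Metric.dist_le_diam_of_mem (chainSupp_finite e).isBounded hx0e hy) hdiame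
  choose E hE using hEx
  set d' : DChain 𝒮 (j + 2) := rest + ∑ q ∈ Q, E q with hd'def
  have hd'supp : ∀ x ∈ chainSupp d', x ∈ chainSupp rest ∨ ∃ q ∈ Q, x ∈ chainSupp (E q) := by
    intro x hx
    rcases chainSupp_add_subset _ _ hx with hx | hx
    · exact Or.inl hx
    · have hx' := chainSupp_sum_subset Q E hx
      simp only [Set.mem_iUnion] at hx'
      obtain ⟨q, hq, hq2⟩ := hx'
      exact Or.inr ⟨q, hq, hq2⟩
  have hrest_supp_d : chainSupp rest ⊆ chainSupp d :=
    chainSupp_subset_of_support_subset (fun σ hσ => (hrest σ hσ).1)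
  have hddiff : d - d' = ∑ q ∈ Q, (dq q - E q) := by
    rw [hd'def, hrestdef, Finset.sum_sub_distrib]
    abel
  have hsmax : ∀ q ∈ Q, s q ≤ Q.sup' hQne (fun q => r q / (N * M)) := by
    intro q hq
    exact Finset.le_sup' (fun q => r q / (N * M)) hq
  refine ⟨d', ?_, ?_, ?_, ?_, ?_, ?_⟩
  · -- δ-fine
    refine FineLE_add ?_ (FineLE_sum (fun q hq => ((hE q hq).2.1).mono hδ₀le))
    exact (FineLE_of_support_subset (fun σ hσ => (hrest σ hσ).1) hdfine).mono hgδ.2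
  · -- boundary
    rw [hd'def, hrestdef, map_add, map_sub, map_sum, map_sum]
    rw [Finset.sum_congr rfl (fun q hq => (hE q hq).1)]
    abel
  · -- away from the shrunk balls
    intro q hq x hx
    rw [Metric.mem_closedBall, dist_comm]
    push_neg
    have hsq := hs0 q hq
    rcases hd'supp x hx with hx | ⟨q', hq', hx⟩
    · obtain ⟨σ, hσ, t, ht⟩ := mem_chainSupp.1 hx
      have hnp := (hrest σ hσ).2 q hq
      have : ¬ dist q (σ t) ≤ s q := fun hle => hnp ⟨t, hle⟩
      have h1 : s q < dist q (σ t) := not_le.1 this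
      have h2 : s q / K ≤ s q := div_le_self (le_of_lt hsq) hK1
      rw [← ht]
      linarith
    · rcases eq_or_ne q' q with rfl | hne
      · exact ((hE q' hq').2.2.1 x hx).1
      · have hxq' : x ∈ Metric.closedBall q' (2 * K * (r q' / (N * M))) := by
          rw [Metric.mem_closedBall, dist_comm]
          exact ((hE q' hq').2.2.1 x hx).2
        have hnot : x ∉ Metric.closedBall q (2 * K * (r q / (N * M))) :=
          Set.disjoint_left.1 (hdisj q' hq' q hq hne) hxq'
        rw [Metric.mem_closedBall] at hnot
        push_neg at hnot
        rw [dist_comm] at hnot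
        have h2 : s q / K ≤ s q := div_le_self (le_of_lt hsq) hK1
        have h3 : s q ≤ 2 * K * s q := by nlinarith
        calc s q / K ≤ 2 * K * s q := le_trans h2 h3
          _ < dist q x := hnot
  · -- supp (d - d') in the 2K-balls
    rw [hddiff]
    intro x hx
    have hx' := chainSupp_sum_subset Q (fun q => dq q - E q) hx
    simp only [Set.mem_iUnion] at hx'
    obtain ⟨q, hq, hx⟩ := hx'
    refine Set.mem_biUnion hq ?_
    rw [Metric.mem_closedBall, dist_comm]
    rcases chainSupp_sub_subset _ _ hx with hx | hx
    · have := hdq_ball q hq x hx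
      have := hδs q hq
      have := hs0 q hq
      have hK1' := hK1
      calc dist q x ≤ s q + δ := hdq_ball q hq x hx
        _ ≤ 2 * K * s q := by nlinarith [hδs q hq, hs0 q hq]
    · exact ((hE q hq).2.2.1 x hx).2
  · -- diameter bound
    set T : ℝ := 2 * K * Real.sqrt (Q.sup' hQne (fun q => r q / (N * M))) with hT
    have hT0 : 0 ≤ T := by positivity
    have hwit : ∀ y ∈ chainSupp d', ∃ x ∈ chainSupp d, dist x y ≤ T := by
      intro y hy
      rcases hd'supp y hy with hy | ⟨q, hq, hy⟩
      · exact ⟨y, hrest_supp_d hy, by simpa using hT0⟩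
      · obtain ⟨x, hxd, hxy⟩ := (hE q hq).2.2.2 y hy
        refine ⟨x, hxd, le_trans hxy ?_⟩
        rw [hT]
        have := Real.sqrt_le_sqrt (hsmax q hq)
        nlinarith [Real.sqrt_nonneg (s q)]
    apply Metric.diam_le_of_forall_dist_le
      (add_nonneg Metric.diam_nonneg (by positivity))
    intro x hx y hy
    obtain ⟨x', hx'd, hx'⟩ := hwit x hx
    obtain ⟨y', hy'd, hy'⟩ := hwit y hy
    have h4 : dist x y ≤ dist x x' + dist x' y' + dist y' y := dist_triangle4 _ _ _ _
    have h5 : dist x' y' ≤ Metric.diam (chainSupp d) :=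
      Metric.dist_le_diam_of_mem (chainSupp_finite d).isBounded hx'd hy'd
    rw [dist_comm x x'] at h4
    rw [hT] at hx' hy'
    rw [← hs] at hx' hy'
    linarith
  · -- statement (5)
    intro h5
    have hδ₀eq : δ₀ = g δ := hδ₀5 h5
    have hEx2 : ∀ q : 𝒮, ∃ e2 : DChain 𝒮 (j + 3), q ∈ Q →
        dbd e2 = dq q - E q ∧ FineLE δ e2 ∧
        chainSupp e2 ⊆ Metric.closedBall q (2 * K ^ 2 * (r q / (N * M))) := by
      intro q
      by_cases hq : q ∈ Q
      swap
      · exact ⟨0, fun h => absurd h hq⟩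
      have hcyc : dbd (dq q - E q) = 0 := by rw [map_sub, (hE q hq).1, sub_self]
      have hfine : FineLE (g δ) (dq q - E q) := by
        refine FineLE_sub ?_ ?_
        · exact (FineLE_of_support_subset (fun σ hσ => (hdq_supp q σ hσ).1) h5).mono
            (hg (g δ) hgδ.1).2
        · exact hδ₀eq ▸ (hE q hq).2.1
      have hsupp : chainSupp (dq q - E q) ⊆ Metric.closedBall q (2 * K * s q) := by
        intro x hx
        rw [Metric.mem_closedBall, dist_comm]
        rcases chainSupp_sub_subset _ _ hx with hx | hx
        · calc dist q x ≤ s q + δ := hdq_ball q hq x hx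
            _ ≤ 2 * K * s q := by nlinarith [hδs q hq, hs0 q hq]
        · exact ((hE q hq).2.2.1 x hx).2
      obtain ⟨e2, he1, he2, he3, -⟩ := hF2 q (hQP hq) δ hδ0 (j + 1) hik (2 * K * s q)
        (by nlinarith [hs0 q hq]) (h2Ks q hq) (dq q - E q) hcyc hfine hsupp
      refine ⟨e2, fun _ => ⟨he1, he2, ?_⟩⟩
      have : K * (2 * K * s q) = 2 * K ^ 2 * (r q / (N * M)) := by rw [hs]; ring
      rw [← this]
      exact he3
    choose E2 hE2 using hEx2
    refine ⟨∑ q ∈ Q, E2 q, ?_, FineLE_sum (fun q hq => (hE2 q hq).2.1), ?_⟩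
    · rw [map_sum, hddiff]
      exact Finset.sum_congr rfl (fun q hq => (hE2 q hq).1)
    · intro x hx
      have hx' := chainSupp_sum_subset Q E2 hx
      simp only [Set.mem_iUnion] at hx'
      obtain ⟨q, hq, hx⟩ := hx'
      exact Set.mem_biUnion hq ((hE2 q hq).2.2 hx)
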